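/- Let g(z) = 2 cosh z and, for x ≥ 5/3, let Q(x) = {z ∈ ℂ : |Re z - x| < 1, |Im z| < π}. Then g(Q(x)) contains the slit annulus {z ∈ ℂ : (1/2)e^x < |z| < 2e^x} \ (-∞, 0]. -/

import Mathlib

set_option maxHeartbeats 1000000 in


theorem two_cosh_image_of_rectangle_contains_slit_annulus
    (g : ℂ → ℂ) (hg : ∀ z, g z = 2 * Complex.cosh z)
    (x : ℝ) (hx : 5/3 ≤ x) :
    {z : ℂ | (1/2) * Real.exp x < ‖z‖ ∧ ‖z‖ < 2 * Real.exp x} \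
      {z : ℂ | ∃ t : ℝ, t ≤ 0 ∧ z = (t : ℂ)} ⊆
    g '' {z : ℂ | |z.re - x| < 1 ∧ |z.im| < Real.pi} := by
  have he : (2.7182818283 : ℝ) < Real.exp 1 := Real.exp_one_gt_d9
  intro w hw
  obtain ⟨⟨h1, h2⟩, hslit⟩ := hw
  simp only [Set.mem_setOf_eq] at hslit
  -- find a square root s of w^2/4 - 1
  obtain ⟨s, hs⟩ := IsAlgClosed.exists_pow_nat_eq (w ^ 2 / 4 - 1) (n := 2) two_pos
  -- pick the root of u^2 - w u + 1 = 0 with larger modulus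
  obtain ⟨u, u', hprod, hsum, habs, habs2⟩ :
      ∃ u u' : ℂ, u * u' = 1 ∧ u + u' = w ∧ ‖u'‖ ≤ ‖u‖ ∧
        ‖u‖ ≤ ‖w / 2‖ + ‖s‖ := by
    rcases le_total (‖w / 2 - s‖) (‖w / 2 + s‖) with h | h
    · exact ⟨w / 2 + s, w / 2 - s, by linear_combination -hs, by ring, h,
        (norm_add_le _ _)⟩
    · refine ⟨w / 2 - s, w / 2 + s, by linear_combination -hs, by ring, h, ?_⟩
      simpa [sub_eq_add_neg, norm_neg] using norm_add_le (w / 2) (-s)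
  have hu0 : u ≠ 0 := by
    intro h; rw [h, zero_mul] at hprod; exact one_ne_zero hprod.symm
  have ht0' := norm_pos_iff.mpr hu0
  obtain ⟨t, ht⟩ : ∃ t : ℝ, ‖u‖ = t := ⟨_, rfl⟩
  rw [ht] at habs habs2
  have ht0 : 0 < t := ht ▸ ht0'
  have habsprod : t * ‖u'‖ = 1 := by rw [← ht, ← norm_mul, hprod, norm_one]
  have ht1 : 1 ≤ t := by nlinarith [norm_nonneg u']
  have hu' : u' = u⁻¹ := by
    field_simp [hu0] at hprod ⊢; linear_combination hprod
  have habsu' : ‖u'‖ = t⁻¹ := by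
    field_simp; linarith [habsprod]
  -- t + 1/t ≥ |w|
  have hsumabs : ‖w‖ ≤ t + t⁻¹ := by
    have h' := norm_add_le u u'
    rw [hsum, ht, habsu'] at h'
    exact h'
  have hexpos : (0:ℝ) < Real.exp x := Real.exp_pos x
  have hE : (0:ℝ) < Real.exp (x - 1) := Real.exp_pos _
  -- key inequality: e^(x-1) + e^(1-x) < e^x/2
  have hE43 : (3.6243757710 : ℝ) ≤ Real.exp (x - 1) ^ 2 := by
    have h2' : Real.exp (x - 1) ^ 2 = Real.exp (2 * (x - 1)) := by
      rw [← Real.exp_nat_mul]; norm_num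
    have hsplit : Real.exp (2 * (x - 1)) = Real.exp 1 * Real.exp (2 * (x - 1) - 1) := by
      rw [← Real.exp_add]; ring_nf
    have h13 : (4/3 : ℝ) ≤ Real.exp (2 * (x - 1) - 1) := by
      have h' : (1/3 : ℝ) ≤ 2 * (x - 1) - 1 := by linarith
      have := Real.add_one_le_exp (1/3 : ℝ)
      have := Real.exp_le_exp.2 h'
      linarith
    rw [h2', hsplit]
    nlinarith [Real.exp_pos (2 * (x - 1) - 1)]
  have hkey : Real.exp (x - 1) + Real.exp (1 - x) < (1/2) * Real.exp x := by
    have hF : Real.exp (1 - x) = (Real.exp (x - 1))⁻¹ := by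
      rw [← Real.exp_neg]; ring_nf
    have hxE : Real.exp x = Real.exp (x - 1) * Real.exp 1 := by
      rw [← Real.exp_add]; ring_nf
    rw [hF, hxE, ← sub_pos]
    have expand : (1/2) * (Real.exp (x-1) * Real.exp 1) - (Real.exp (x-1) + (Real.exp (x-1))⁻¹)
        = ((1/2) * Real.exp 1 * Real.exp (x-1)^2 - Real.exp (x-1)^2 - 1) / Real.exp (x-1) := by
      field_simp; ring
    rw [expand]
    apply div_pos _ hE
    nlinarith
  -- lower bound: exp (x-1) < t
  have hlow : Real.exp (x - 1) < t := by
    by_contra hneg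
    push_neg at hneg
    have h1' : (1:ℝ) ≤ Real.exp (x - 1) := le_trans ht1 hneg
    have hF : Real.exp (1 - x) = (Real.exp (x - 1))⁻¹ := by
      rw [← Real.exp_neg]; ring_nf
    have hmono : t + t⁻¹ ≤ Real.exp (x - 1) + Real.exp (1 - x) := by
      rw [hF]
      set E := Real.exp (x - 1)
      have htE : (0:ℝ) < t * E := by positivity
      have hmul : (t + t⁻¹) * (t * E) ≤ (E + E⁻¹) * (t * E) := by
        have e1 : (t + t⁻¹) * (t * E) = t ^ 2 * E + E := by field_simp
        have e2 : (E + E⁻¹) * (t * E) = E ^ 2 * t + t := by field_simp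
        rw [e1, e2]
        nlinarith [mul_nonneg (sub_nonneg.2 hneg)
          (sub_nonneg.2 (one_le_mul_of_one_le_of_one_le ht1 h1' : (1:ℝ) ≤ t * E))]
      exact le_of_mul_le_mul_right hmul htE
    linarith [lt_of_lt_of_le h1 hsumabs]
  -- upper bound: t < exp (x+1)
  have hhigh : t < Real.exp (x + 1) := by
    have hs2 : ‖s‖ ^ 2 ≤ ‖w‖ ^ 2 / 4 + 1 := by
      have h' : ‖s‖ ^ 2 = ‖w ^ 2 / 4 - 1‖ := by
        rw [← norm_pow, hs]
      have h'' : ‖w ^ 2 / 4 - 1‖ ≤ ‖w ^ 2 / 4‖ + 1 := by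
        have h4 := norm_add_le (w ^ 2 / 4) (-1)
        rw [norm_neg, norm_one] at h4
        rw [sub_eq_add_neg]; exact h4
      have h3 : ‖w ^ 2 / 4‖ = ‖w‖ ^ 2 / 4 := by
        rw [norm_div, norm_pow]; norm_num
      rw [h', ← h3]; linarith [h'']
    have hsle : ‖s‖ ≤ ‖w‖ / 2 + 1 := by
      nlinarith [norm_nonneg s, norm_nonneg w]
    have ht2 : t ≤ ‖w‖ + 1 := by
      have h' : ‖w / 2‖ = ‖w‖ / 2 := by
        rw [norm_div]; norm_num
      rw [h'] at habs2; linarith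
    have hfin : (2:ℝ) * Real.exp x + 1 < Real.exp (x + 1) := by
      have hx1 : Real.exp (x + 1) = Real.exp x * Real.exp 1 := by rw [← Real.exp_add]
      have hex : (8/3 : ℝ) ≤ Real.exp x := by
        have := Real.add_one_le_exp x; linarith
      rw [hx1]
      nlinarith [mul_le_mul_of_nonneg_left he.le hexpos.le]
    linarith
  -- u is not a nonpositive real
  have hargne : u.arg ≠ Real.pi := by
    intro harg
    obtain ⟨hre, him⟩ := Complex.arg_eq_pi_iff.1 harg
    apply hslit
    refine ⟨u.re + u.re⁻¹, ?_, ?_⟩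
    · have h5 : u.re⁻¹ < 0 := by
        rw [inv_lt_zero]; exact hre
      linarith
    · have hu : u = (u.re : ℂ) := Complex.ext rfl (by simp [him])
      rw [← hsum, hu']
      push_cast
      rw [← hu]
  refine ⟨Complex.log u, ⟨?_, ?_⟩, ?_⟩
  · -- |Re log u - x| < 1
    rw [Complex.log_re, ht, abs_sub_lt_iff]
    constructor
    · have : Real.log t < x + 1 := (Real.log_lt_iff_lt_exp ht0).2 hhigh
      linarith
    · have : x - 1 < Real.log t := (Real.lt_log_iff_exp_lt ht0).2 hlow
      linarith
  · -- |Im log u| < π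
    rw [Complex.log_im]
    rcases lt_or_eq_of_le (Complex.abs_arg_le_pi u) with h | h
    · exact h
    · exfalso
      apply hargne
      rcases (abs_eq (le_of_lt Real.pi_pos)).1 h with h' | h'
      · exact h'
      · exfalso; linarith [Complex.neg_pi_lt_arg u]
  · -- g (log u) = w
    rw [hg]
    unfold Complex.cosh
    rw [Complex.exp_neg, Complex.exp_log hu0, ← hsum, hu']
    ring
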